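/- Let x : ℝ → ℝ^N be a C² solution of ẍ_k = −ω_k x_k − α x_k with α = ⟨ẋ,ẋ⟩ − ⟨Ωx,x⟩, satisfying ⟨x,x⟩ = 1 and ⟨ẋ,x⟩ = 0. Then for each k, the function F_k = x_k² + Σ_{j≠k} (ẋ_k x_j − x_k ẋ_j)²/(ω_k − ω_j) is constant in time (assuming ω_j pairwise distinct). -/

import Mathlib

open Finset

theorem neumann_uhlenbeck_integrals_constant (N : ℕ) (ω : Fin N → ℝ)
    (hω : ∀ j k : Fin N, j ≠ k → ω j ≠ ω k)
    (x : ℝ → (Fin N → ℝ))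
    (hx : ContDiff ℝ 2 x)
    (heq : ∀ t, ∀ k, deriv (deriv x) t k =
      -ω k * x t k
        - ((∑ i, deriv x t i * deriv x t i) - ∑ i, ω i * x t i * x t i) * x t k)
    (hsphere : ∀ t, ∑ i, x t i * x t i = 1)
    (htangent : ∀ t, ∑ i, deriv x t i * x t i = 0) :
    ∀ k : Fin N, ∀ t s : ℝ,
      (x t k ^ 2 + ∑ j ∈ Finset.univ.erase k,
          (deriv x t k * x t j - x t k * deriv x t j) ^ 2 / (ω k - ω j))
      = (x s k ^ 2 + ∑ j ∈ Finset.univ.erase k,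
          (deriv x s k * x s j - x s k * deriv x s j) ^ 2 / (ω k - ω j)) := by
  have h2 : ((2 : ℕ∞) : WithTop ℕ∞) = ((1 : ℕ) : ℕ∞) + 1 := by norm_num
  have hx1 : Differentiable ℝ x := hx.differentiable (by norm_num)
  have hx2 : Differentiable ℝ (deriv x) := by
    have := (contDiff_succ_iff_deriv.mp (by exact_mod_cast hx : ContDiff ℝ ((1 : ℕ) + 1) x)).2.2
    exact this.differentiable (by norm_num)
  intro k t s
  set F : ℝ → ℝ := fun t => x t k ^ 2 + ∑ j ∈ Finset.univ.erase k,
      (deriv x t k * x t j - x t k * deriv x t j) ^ 2 / (ω k - ω j) with hF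
  have key : ∀ t : ℝ, HasDerivAt F 0 t := by
    intro t
    have hcomp : ∀ i : Fin N, HasDerivAt (fun t => x t i) (deriv x t i) t := by
      intro i
      exact hasDerivAt_pi.mp (hx1 t).hasDerivAt i
    have hcomp' : ∀ i : Fin N, HasDerivAt (fun t => deriv x t i) (deriv (deriv x) t i) t := by
      intro i
      exact hasDerivAt_pi.mp (hx2 t).hasDerivAt i
    -- per-j derivative
    have hterm : ∀ j ∈ Finset.univ.erase k,
        HasDerivAt (fun t => (deriv x t k * x t j - x t k * deriv x t j) ^ 2 / (ω k - ω j))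
          (-2 * (deriv x t k * x t j - x t k * deriv x t j) * x t k * x t j) t := by
      intro j hj
      have hjk : j ≠ k := Finset.ne_of_mem_erase hj
      have hne : ω k - ω j ≠ 0 := sub_ne_zero.2 (hω k j hjk.symm)
      have hJ : HasDerivAt (fun t => deriv x t k * x t j - x t k * deriv x t j)
          ((ω j - ω k) * (x t k * x t j)) t := by
        have h := ((hcomp' k).mul (hcomp j)).sub ((hcomp k).mul (hcomp' j))
        refine h.congr_deriv ?_
        rw [heq t k, heq t j]
        ring
      have h := (hJ.pow 2).div_const (ω k - ω j)
      refine h.congr_deriv ?_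
      field_simp
      ring
    have hsum := HasDerivAt.sum hterm
    have hpow := (hcomp k).pow 2
    have htot := hpow.add hsum
    have hzero : (((2 : ℕ) : ℝ) * x t k ^ (2 - 1) * deriv x t k) +
        (∑ j ∈ Finset.univ.erase k,
          -2 * (deriv x t k * x t j - x t k * deriv x t j) * x t k * x t j) = 0 := by
      have hs1 : ∑ j ∈ Finset.univ.erase k, x t j * x t j = 1 - x t k * x t k := by
        have := Finset.add_sum_erase Finset.univ (fun j => x t j * x t j) (Finset.mem_univ k)
        rw [hsphere t] at this
        linarith
      have hs2 : ∑ j ∈ Finset.univ.erase k, deriv x t j * x t j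
          = -(deriv x t k * x t k) := by
        have := Finset.add_sum_erase Finset.univ (fun j => deriv x t j * x t j)
          (Finset.mem_univ k)
        rw [htangent t] at this
        linarith
      have hre : ∑ j ∈ Finset.univ.erase k,
          -2 * (deriv x t k * x t j - x t k * deriv x t j) * x t k * x t j
          = ∑ j ∈ Finset.univ.erase k,
            ((-2 * x t k * deriv x t k) * (x t j * x t j)
              + (2 * x t k * x t k) * (deriv x t j * x t j)) := by
        apply Finset.sum_congr rfl
        intro j _
        ring
      rw [hre, Finset.sum_add_distrib, ← Finset.mul_sum, ← Finset.mul_sum, hs1, hs2]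
      push_cast
      ring
    rw [hzero] at htot
    refine htot.congr_of_eventuallyEq (Filter.Eventually.of_forall fun u => ?_)
    simp [hF, Finset.sum_apply]
  have hdiff : Differentiable ℝ F := fun u => (key u).differentiableAt
  have hderiv : ∀ u, deriv F u = 0 := fun u => (key u).deriv
  exact is_const_of_deriv_eq_zero hdiff hderiv t s
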